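/- Let dA, dE ≥ 1, let ψ ∈ ℂ^{dA} ⊗ ℂ^{dE} be a unit vector, and let M, Q be dA × dA complex matrices. Then ‖(M ⊗ I)|ψ⟩⟨ψ| − (Q ⊗ I)|ψ⟩⟨ψ|‖₁ ≤ ‖M − Q‖₁, where I is the dE × dE identity matrix. -/

import Mathlib

open scoped Matrix Kronecker BigOperators ComplexOrder

/-- The trace norm of a complex matrix: `‖A‖₁ = tr √(Aᴴ A)`. -/
noncomputable def traceNorm {n : Type*} [Fintype n] [DecidableEq n]
    (A : Matrix n n ℂ) : ℝ :=
  ((Matrix.posSemidef_conjTranspose_mul_self A).1.eigenvectorUnitary.1 *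
      Matrix.diagonal (((↑) : ℝ → ℂ) ∘ Real.sqrt ∘ (Matrix.posSemidef_conjTranspose_mul_self A).1.eigenvalues) *
      (star (Matrix.posSemidef_conjTranspose_mul_self A).1.eigenvectorUnitary : Matrix n n ℂ)).trace.re

/-- The rank-one outer product `|v⟩⟨v|`. -/
def outer {n : Type*} (v : n → ℂ) : Matrix n n ℂ :=
  Matrix.of fun i j => v i * (starRingEnd ℂ) (v j)

/-- `v` is a unit vector. -/
def IsUnitVec {n : Type*} [Fintype n] (v : n → ℂ) : Prop :=
  ∑ i, ‖v i‖ ^ 2 = 1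

/-- Partial trace over the second (E) tensor factor. -/
noncomputable def trE {dA dE : ℕ} (M : Matrix (Fin dA × Fin dE) (Fin dA × Fin dE) ℂ) :
    Matrix (Fin dA) (Fin dA) ℂ :=
  Matrix.of fun i j => ∑ k : Fin dE, M (i, k) (j, k)

/-- Partial trace over the first (A) tensor factor. -/
noncomputable def trA {dA dE : ℕ} (M : Matrix (Fin dA × Fin dE) (Fin dA × Fin dE) ℂ) :
    Matrix (Fin dE) (Fin dE) ℂ :=
  Matrix.of fun i j => ∑ k : Fin dA, M (k, i) (k, j)

section Aux

variable {n : Type*} [Fintype n] [DecidableEq n]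

lemma traceNorm_eq_sum (D : Matrix n n ℂ) :
    traceNorm D = ∑ i, Real.sqrt ((Matrix.posSemidef_conjTranspose_mul_self D).1.eigenvalues i) := by
  set hA := Matrix.posSemidef_conjTranspose_mul_self D
  rw [traceNorm, Matrix.trace_mul_cycle]
  rw [(Matrix.mem_unitaryGroup_iff').mp hA.1.eigenvectorUnitary.2, one_mul]
  simp [Matrix.trace, Matrix.diag, Complex.ofReal_re]

lemma mulVec_traceNorm_bound (D : Matrix n n ℂ) (v : n → ℂ) :
    (star (D *ᵥ v) ⬝ᵥ (D *ᵥ v)).re ≤ (traceNorm D)^2 * (star v ⬝ᵥ v).re := by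
  set hA := Matrix.posSemidef_conjTranspose_mul_self D with hAdef
  set U : Matrix n n ℂ := hA.1.eigenvectorUnitary.1 with hU
  set lam := hA.1.eigenvalues with hlam
  set w : n → ℂ := star U *ᵥ v with hw
  have hUstar : (star U)ᴴ = U := by
    rw [Matrix.star_eq_conjTranspose, Matrix.conjTranspose_conjTranspose]
  have hsw : star w = star v ᵥ* U := by
    rw [hw, Matrix.star_mulVec, hUstar]
  have h1 : star (D *ᵥ v) ⬝ᵥ (D *ᵥ v) = ∑ i, (lam i : ℂ) * (star (w i) * w i) := by
    rw [Matrix.star_mulVec, Matrix.dotProduct_mulVec, Matrix.vecMul_vecMul,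
      hA.1.spectral_theorem, Unitary.conjStarAlgAut_apply, ← Matrix.vecMul_vecMul, ← Matrix.vecMul_vecMul, ← hsw,
      ← Matrix.dotProduct_mulVec, ← hw]
    simp only [dotProduct, Matrix.vecMul_diagonal, Function.comp_apply]
    refine Finset.sum_congr rfl fun i _ => ?_
    simp only [← hlam, Pi.star_apply]
    rw [mul_right_comm, mul_comm]
    rfl
  have h2 : star v ⬝ᵥ v = star w ⬝ᵥ w := by
    rw [hsw, Matrix.dotProduct_mulVec, Matrix.vecMul_vecMul,
      (Matrix.mem_unitaryGroup_iff).mp hA.1.eigenvectorUnitary.2, Matrix.vecMul_one]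
  have hre1 : (star (D *ᵥ v) ⬝ᵥ (D *ᵥ v)).re = ∑ i, lam i * Complex.normSq (w i) := by
    rw [h1, Complex.re_sum]
    refine Finset.sum_congr rfl fun i _ => ?_
    rw [Complex.star_def, ← Complex.normSq_eq_conj_mul_self, ← Complex.ofReal_mul, Complex.ofReal_re]
  have hre2 : (star v ⬝ᵥ v).re = ∑ i, Complex.normSq (w i) := by
    rw [h2, dotProduct, Complex.re_sum]
    refine Finset.sum_congr rfl fun i _ => ?_
    rw [Pi.star_apply, Complex.star_def, ← Complex.normSq_eq_conj_mul_self, Complex.ofReal_re]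
  rw [hre1, hre2, traceNorm_eq_sum, Finset.mul_sum]
  refine Finset.sum_le_sum fun i _ => ?_
  refine mul_le_mul_of_nonneg_right ?_ (Complex.normSq_nonneg _)
  have hnn : 0 ≤ lam i := hA.eigenvalues_nonneg i
  calc lam i = (Real.sqrt (lam i))^2 := (Real.sq_sqrt hnn).symm
    _ ≤ (∑ j, Real.sqrt (lam j))^2 := by
        refine pow_le_pow_left₀ (Real.sqrt_nonneg _) ?_ 2
        exact Finset.single_le_sum (fun j _ => Real.sqrt_nonneg _) (Finset.mem_univ i)

lemma dot_self_eq (u : n → ℂ) :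
    star u ⬝ᵥ u = ((∑ i, ‖u i‖^2 : ℝ) : ℂ) := by
  rw [dotProduct, Complex.ofReal_sum]
  refine Finset.sum_congr rfl fun i _ => ?_
  rw [Pi.star_apply, Complex.star_def, ← Complex.normSq_eq_conj_mul_self,
    Complex.normSq_eq_norm_sq]

lemma traceNorm_rankOne (u ψ : n → ℂ) (hψ : ∑ i, ‖ψ i‖^2 = 1) :
    traceNorm (Matrix.of fun i j => u i * (starRingEnd ℂ) (ψ j))
      = Real.sqrt ((star u ⬝ᵥ u).re) := by
  set A : Matrix n n ℂ := Matrix.of fun i j => u i * (starRingEnd ℂ) (ψ j) with hAdef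
  have hdot : star u ⬝ᵥ u = ((∑ i, ‖u i‖^2 : ℝ) : ℂ) := dot_self_eq u
  have hnn : 0 ≤ (star u ⬝ᵥ u).re := by
    rw [hdot, Complex.ofReal_re]
    exact Finset.sum_nonneg fun i _ => sq_nonneg _
  set r : ℝ := Real.sqrt ((star u ⬝ᵥ u).re) with hrdef
  have hr : 0 ≤ r := Real.sqrt_nonneg _
  have hr2 : ((r^2 : ℝ) : ℂ) = star u ⬝ᵥ u := by
    rw [hrdef, Real.sq_sqrt hnn, hdot, Complex.ofReal_re]
  set B : Matrix n n ℂ := (r : ℂ) • Matrix.of (fun i j => ψ i * (starRingEnd ℂ) (ψ j)) with hBdef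
  have hψ1 : (∑ k, (starRingEnd ℂ) (ψ k) * ψ k) = 1 := by
    have := dot_self_eq ψ
    rw [hψ] at this
    simpa [dotProduct, Complex.star_def] using this
  have hBpsd : B.PosSemidef := by
    have : B = (Matrix.of fun (_ : Unit) j => ((Real.sqrt r : ℝ) : ℂ) * (starRingEnd ℂ) (ψ j))ᴴ
        * (Matrix.of fun (_ : Unit) j => ((Real.sqrt r : ℝ) : ℂ) * (starRingEnd ℂ) (ψ j)) := by
      ext i j
      simp [hBdef, Matrix.mul_apply, Matrix.conjTranspose_apply, ← Complex.ofReal_mul,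
        Real.mul_self_sqrt hr]
      have hss : ((Real.sqrt r : ℝ):ℂ) * ((Real.sqrt r : ℝ):ℂ) = (r:ℂ) := by
        rw [← Complex.ofReal_mul, Real.mul_self_sqrt hr]
      rw [← hss]
      ring
    rw [this]
    exact Matrix.posSemidef_conjTranspose_mul_self _
  have hBsq : B ^ 2 = Aᴴ * A := by
    rw [pow_two]
    ext i j
    simp only [hBdef, hAdef, Matrix.mul_apply, Matrix.smul_apply, Matrix.of_apply,
      Matrix.conjTranspose_apply, smul_eq_mul, star_mul', Complex.star_def,
      Complex.conj_conj, RingHom.map_mul]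
    have e1 : ∑ x, (r:ℂ) * (ψ i * (starRingEnd ℂ) (ψ x)) * ((r:ℂ) * (ψ x * (starRingEnd ℂ) (ψ j)))
        = ((r:ℂ) * (r:ℂ) * (ψ i * (starRingEnd ℂ) (ψ j))) * ∑ k, (starRingEnd ℂ) (ψ k) * ψ k := by
      rw [Finset.mul_sum]; exact Finset.sum_congr rfl fun k _ => by ring
    have e2 : ∑ k, (starRingEnd ℂ) (u k) * ψ i * (u k * (starRingEnd ℂ) (ψ j))
        = (ψ i * (starRingEnd ℂ) (ψ j)) * (star u ⬝ᵥ u) := by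
      rw [dotProduct, Finset.mul_sum]
      refine Finset.sum_congr rfl fun k _ => ?_
      simp only [Pi.star_apply, Complex.star_def]
      ring
    rw [e1, hψ1, mul_one, e2, ← hr2]
    push_cast
    ring
  have hsqrt : (Matrix.posSemidef_conjTranspose_mul_self A).1.eigenvectorUnitary.1 *
      Matrix.diagonal (((↑) : ℝ → ℂ) ∘ Real.sqrt ∘ (Matrix.posSemidef_conjTranspose_mul_self A).1.eigenvalues) *
      (star (Matrix.posSemidef_conjTranspose_mul_self A).1.eigenvectorUnitary : Matrix n n ℂ) = B := by
    open scoped MatrixOrder in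
    rw [← CFC.sqrt_sq B hBpsd.nonneg, hBsq,
      CFC.sqrt_eq_real_sqrt _ (Matrix.posSemidef_conjTranspose_mul_self A).nonneg, cfcₙ_eq_cfc,
      (Matrix.posSemidef_conjTranspose_mul_self A).1.cfc_eq, Matrix.IsHermitian.cfc,
      Unitary.conjStarAlgAut_apply]
    rfl
  rw [traceNorm, hsqrt, hBdef]
  have : ((r : ℂ) • Matrix.of (fun i j => ψ i * (starRingEnd ℂ) (ψ j))).trace
      = (r : ℂ) * ∑ i, ψ i * (starRingEnd ℂ) (ψ i) := by
    simp [Matrix.trace, Matrix.diag, Finset.mul_sum]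
  rw [this]
  have : (∑ i, ψ i * (starRingEnd ℂ) (ψ i)) = 1 := by
    rw [← hψ1]; exact Finset.sum_congr rfl fun i _ => mul_comm _ _
  rw [this, mul_one, Complex.ofReal_re]


end Aux

theorem local_operator_traceNorm_bound
    {dA dE : ℕ} (hdA : 1 ≤ dA) (hdE : 1 ≤ dE)
    (ψ : Fin dA × Fin dE → ℂ) (hψ : IsUnitVec ψ)
    (M Q : Matrix (Fin dA) (Fin dA) ℂ) :
    traceNorm ((M ⊗ₖ (1 : Matrix (Fin dE) (Fin dE) ℂ)) * outer ψ
        - (Q ⊗ₖ (1 : Matrix (Fin dE) (Fin dE) ℂ)) * outer ψ)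
      ≤ traceNorm (M - Q) := by
  set D := M - Q with hD
  set u : Fin dA × Fin dE → ℂ := (D ⊗ₖ (1 : Matrix (Fin dE) (Fin dE) ℂ)) *ᵥ ψ with hu
  have hfact : (M ⊗ₖ (1 : Matrix (Fin dE) (Fin dE) ℂ)) * outer ψ
      - (Q ⊗ₖ (1 : Matrix (Fin dE) (Fin dE) ℂ)) * outer ψ
      = Matrix.of fun i j => u i * (starRingEnd ℂ) (ψ j) := by
    have hker : (D ⊗ₖ (1 : Matrix (Fin dE) (Fin dE) ℂ))
        = M ⊗ₖ (1 : Matrix (Fin dE) (Fin dE) ℂ) - Q ⊗ₖ (1 : Matrix (Fin dE) (Fin dE) ℂ) := by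
      ext i j
      simp [hD, Matrix.kroneckerMap_apply, Matrix.sub_apply, sub_mul]
    rw [← sub_mul, ← hker]
    ext i j
    simp only [Matrix.mul_apply, outer, Matrix.of_apply, hu, Matrix.mulVec, dotProduct]
    rw [Finset.sum_mul]
    exact Finset.sum_congr rfl fun k _ => by ring
  rw [hfact, traceNorm_rankOne u ψ hψ]
  have hcol : ∀ k : Fin dE, ∀ i : Fin dA, u (i, k) = (D *ᵥ fun j => ψ (j, k)) i := by
    intro k i
    simp only [hu, Matrix.mulVec, dotProduct, Fintype.sum_prod_type,
      Matrix.kroneckerMap_apply, Matrix.one_apply]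
    refine Finset.sum_congr rfl fun j _ => ?_
    simp
  have hsplit : (star u ⬝ᵥ u).re
      = ∑ k : Fin dE, (star (D *ᵥ fun j => ψ (j, k)) ⬝ᵥ (D *ᵥ fun j => ψ (j, k))).re := by
    rw [dot_self_eq u, Complex.ofReal_re, Fintype.sum_prod_type, Finset.sum_comm]
    refine Finset.sum_congr rfl fun k _ => ?_
    rw [dot_self_eq, Complex.ofReal_re]
    exact Finset.sum_congr rfl fun i _ => by rw [hcol k i]
  have hψsplit : ∑ k : Fin dE, ((star fun j => ψ (j, k)) ⬝ᵥ fun j => ψ (j, k)).re = 1 := by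
    have : ∑ k : Fin dE, ((star fun j => ψ (j, k)) ⬝ᵥ fun j => ψ (j, k)).re
        = ∑ k : Fin dE, ∑ j : Fin dA, ‖ψ (j, k)‖ ^ 2 := by
      refine Finset.sum_congr rfl fun k _ => ?_
      rw [dot_self_eq, Complex.ofReal_re]
    have hψ' := hψ
    rw [IsUnitVec, Fintype.sum_prod_type] at hψ'
    rw [this, Finset.sum_comm]
    exact hψ'
  have hbound : (star u ⬝ᵥ u).re ≤ (traceNorm D)^2 := by
    rw [hsplit]
    calc ∑ k : Fin dE, (star (D *ᵥ fun j => ψ (j, k)) ⬝ᵥ (D *ᵥ fun j => ψ (j, k))).re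
        ≤ ∑ k : Fin dE, (traceNorm D)^2 * ((star fun j => ψ (j, k)) ⬝ᵥ fun j => ψ (j, k)).re :=
          Finset.sum_le_sum fun k _ => mulVec_traceNorm_bound D _
      _ = (traceNorm D)^2 := by rw [← Finset.mul_sum, hψsplit, mul_one]
  have htn : 0 ≤ traceNorm D := by
    rw [traceNorm_eq_sum]
    exact Finset.sum_nonneg fun i _ => Real.sqrt_nonneg _
  calc Real.sqrt ((star u ⬝ᵥ u).re) ≤ Real.sqrt ((traceNorm D)^2) := Real.sqrt_le_sqrt hbound
    _ = traceNorm D := Real.sqrt_sq htn
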